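/- Define U₃=(ℕ, F₃) with F₃={pᵢ : i∈ℕ} ∪ {lᵢ : i∈ℕ}, where pᵢ(j)=1 iff j=i and lᵢ(j)=1 iff j>i. Then for every n∈ℕ, the system Sₙ={p₁(x)=0,…,pₙ(x)=0, lₙ(x)=0} is inconsistent on ℕ (with ℕ={1,2,…}) but every proper subsystem of Sₙ is consistent. Hence U₃ is not r-i-reduced for any r. -/
import Mathlib


/-- An equation system over a binary information system with element set `A`
is a set of pairs `(g, δ)` encoding equations `g(x) = δ`. It is consistent
if it has a solution in `A`. -/
def Consistent {A : Type} (S : Set ((A → Bool) × Bool)) : Prop :=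
  ∃ a : A, ∀ e ∈ S, e.1 a = e.2

/-- The system `S` uses only attributes from `F`. -/
def OverF {A : Type} (F : Set (A → Bool)) (S : Set ((A → Bool) × Bool)) : Prop :=
  ∀ e ∈ S, e.1 ∈ F

/-- Solution set of an equation system. -/
def Sol {A : Type} (S : Set ((A → Bool) × Bool)) : Set A :=
  {a | ∀ e ∈ S, e.1 a = e.2}

/-- `U = (A, F)` is `r`-i-reduced: every inconsistent (finite) equation system over `U`
has an inconsistent subsystem with at most `r` equations. -/
def IReduced {A : Type} (F : Set (A → Bool)) (r : ℕ) : Prop :=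
  ∀ S : Set ((A → Bool) × Bool), OverF F S → S.Finite → ¬ Consistent S →
    ∃ T ⊆ S, ¬ Consistent T ∧ T.ncard ≤ r

/-- `U = (A, F)` is `r`-reduced: every consistent (finite) equation system over `U`
has a subsystem with the same solution set and at most `r` equations. -/
def RReduced {A : Type} (F : Set (A → Bool)) (r : ℕ) : Prop :=
  ∀ S : Set ((A → Bool) × Bool), OverF F S → S.Finite → Consistent S →
    ∃ T ⊆ S, Sol T = Sol S ∧ T.ncard ≤ r

/-- `pᵢ(j) = 1` iff `j = i`. -/
def pAttr (i : ℕ+) : ℕ+ → Bool := fun j => decide (j = i)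

/-- `lᵢ(j) = 1` iff `j > i`. -/
def lAttr (i : ℕ+) : ℕ+ → Bool := fun j => decide (i < j)

/-- The attribute set of `U₃`. -/
def F3 : Set (ℕ+ → Bool) := Set.range pAttr ∪ Set.range lAttr

lemma pAttr_inj : Function.Injective pAttr := by
  intro i j h
  have := congrFun h i
  simpa [pAttr] using this

lemma pAttr_ne_lAttr (k n : ℕ+) : pAttr k ≠ lAttr n := by
  intro h
  have h1 := congrFun h (n+1)
  have h2 := congrFun h (n+2)
  simp only [pAttr, lAttr, decide_eq_decide] at h1 h2
  have e1 : n + 1 = k := h1.mpr (by exact_mod_cast Nat.lt_succ_self (n:ℕ))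
  have e2 : n + 2 = k := h2.mpr (by exact_mod_cast Nat.lt_add_of_pos_right (by norm_num : 0 < 2))
  have := congrArg (PNat.val) (e1.trans e2.symm)
  push_cast at this
  omega

lemma main_lemma : ∀ n : ℕ+, ∀ S : Set ((ℕ+ → Bool) × Bool),
      S = insert (lAttr n, false)
          (Set.range fun i : Fin (n : ℕ) => (pAttr (Nat.succPNat i.val), false)) →
      ¬ Consistent S ∧ ∀ T, T ⊂ S → Consistent T := by
  intro n S hS
  subst hS
  constructor
  · rintro ⟨a, ha⟩
    by_cases h : (n : ℕ) < (a : ℕ)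
    · have := ha (lAttr n, false) (Set.mem_insert _ _)
      simp only [lAttr] at this
      have hlt : n < a := h
      simp [hlt] at this
    · have hpos := a.pos
      have hi : (a : ℕ) - 1 < (n : ℕ) := by omega
      have hmem : (pAttr (Nat.succPNat ((a:ℕ)-1)), false) ∈
          insert (lAttr n, false)
          (Set.range fun i : Fin (n : ℕ) => (pAttr (Nat.succPNat i.val), false)) :=
        Set.mem_insert_of_mem _ ⟨⟨(a:ℕ)-1, hi⟩, rfl⟩
      have := ha _ hmem
      simp only [pAttr, decide_eq_false_iff_not] at this
      apply this
      apply PNat.coe_injective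
      simp [Nat.succPNat]
      omega
  · intro T hT
    obtain ⟨e, heS, heT⟩ := Set.exists_of_ssubset hT
    rcases heS with he | ⟨i, hi⟩
    · -- missing equation is lₙ = 0; take a = n+1
      refine ⟨n+1, ?_⟩
      intro f hfT
      have hfS := hT.1 hfT
      rcases hfS with hf | ⟨j, hj⟩
      · exact absurd (hf.trans he.symm) (by rintro rfl; exact heT hfT)
      · rw [← hj]
        simp only [pAttr, decide_eq_false_iff_not]
        intro hEq
        have : (n:ℕ) + 1 = j.val + 1 := by
          have := congrArg (PNat.val) hEq
          simpa [Nat.succPNat] using this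
        omega
    · -- missing equation is p_{i+1} = 0; take a = i+1
      refine ⟨Nat.succPNat i.val, ?_⟩
      intro f hfT
      have hfS := hT.1 hfT
      rcases hfS with hf | ⟨j, hj⟩
      · rw [hf]
        simp only [lAttr, decide_eq_false_iff_not]
        intro hlt
        have : (n:ℕ) < i.val + 1 := by exact_mod_cast hlt
        omega
      · rw [← hj]
        simp only [pAttr, decide_eq_false_iff_not]
        intro hEq
        have hij : i = j := by
          have := congrArg (PNat.val) hEq
          simp [Nat.succPNat] at this
          exact Fin.ext this
        rw [← hij] at hj
        exact heT ((hj.symm.trans hi) ▸ hfT)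


/-- in `U₃`, for every `n` the system
`Sₙ = {p₁(x)=0, …, pₙ(x)=0, lₙ(x)=0}` is inconsistent while every proper subsystem of
it is consistent; hence `U₃` is not `r`-i-reduced for any `r`. -/
theorem stmt13 :
    (∀ n : ℕ+, ∀ S : Set ((ℕ+ → Bool) × Bool),
      S = insert (lAttr n, false)
          (Set.range fun i : Fin (n : ℕ) => (pAttr (Nat.succPNat i.val), false)) →
      ¬ Consistent S ∧ ∀ T, T ⊂ S → Consistent T) ∧
    ∀ r : ℕ, ¬ IReduced F3 r := by
  refine ⟨main_lemma, ?_⟩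
  intro r hRed
  set n : ℕ+ := Nat.succPNat r
  set S : Set ((ℕ+ → Bool) × Bool) :=
    insert (lAttr n, false)
      (Set.range fun i : Fin (n : ℕ) => (pAttr (Nat.succPNat i.val), false)) with hSdef
  have hmain := main_lemma n S hSdef
  have hOver : OverF F3 S := by
    rintro e (he | ⟨i, hi⟩)
    · rw [he]; exact Or.inr ⟨n, rfl⟩
    · rw [← hi]; exact Or.inl ⟨_, rfl⟩
  have hinj : Function.Injective
      (fun i : Fin (n : ℕ) => ((pAttr (Nat.succPNat i.val), false) : (ℕ+ → Bool) × Bool)) := by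
    intro i j h
    have := pAttr_inj (congrArg Prod.fst h)
    have : i.val = j.val := by
      have := congrArg PNat.val this
      simpa [Nat.succPNat] using this
    exact Fin.ext this
  have hnotmem : (lAttr n, false) ∉
      Set.range fun i : Fin (n : ℕ) => ((pAttr (Nat.succPNat i.val), false) : (ℕ+ → Bool) × Bool) := by
    rintro ⟨i, hi⟩
    exact pAttr_ne_lAttr _ _ (congrArg Prod.fst hi)
  have hfin : S.Finite := (Set.finite_range _).insert _
  have hcard : S.ncard = (n : ℕ) + 1 := by
    rw [hSdef, Set.ncard_insert_of_notMem hnotmem (Set.finite_range _)]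
    rw [← Set.image_univ, Set.ncard_image_of_injective _ hinj, Set.ncard_univ]
    simp
  obtain ⟨T, hTS, hTinc, hTcard⟩ := hRed S hOver hfin hmain.1
  have hTne : T ≠ S := by
    intro h
    rw [h, hcard] at hTcard
    have hn : (n : ℕ) = r + 1 := by simp [n]
    omega
  exact hTinc (hmain.2 T ⟨hTS, fun h => hTne (Set.Subset.antisymm hTS h)⟩)
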